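/- A linear [n,k]_q code C with generator matrix G satisfies C ∩ C^⊥ = {0} (i.e., C is linear complementary dual) if and only if the k×k matrix G·G^t is invertible. -/

import Mathlib

open Matrix

variable {F : Type*} [Field F] [Fintype F]

/-- The Euclidean dual of a linear code `C ⊆ F^n`. -/
def dualCode {n : ℕ} (C : Submodule F (Fin n → F)) : Submodule F (Fin n → F) where
  carrier := {u | ∀ c ∈ C, dotProduct u c = 0}
  add_mem' := by
    intro a b ha hb c hc
    simp [add_dotProduct, ha c hc, hb c hc]
  zero_mem' := by
    intro c hc
    simp
  smul_mem' := by
    intro r a ha c hc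
    simp [smul_dotProduct, ha c hc]

/-- `G` is a generator matrix of the code `C`: its rows form a basis of `C`. -/
def IsGenMat {n k : ℕ} (C : Submodule F (Fin n → F)) (G : Matrix (Fin k) (Fin n) F) : Prop :=
  LinearIndependent F (fun i => G i) ∧ Submodule.span F (Set.range fun i => G i) = C

private lemma vecMul_eq_sum' {n k : ℕ} (G : Matrix (Fin k) (Fin n) F) (x : Fin k → F) :
    ∑ i, x i • G i = Matrix.vecMul x G := by
  funext j
  simp [Matrix.vecMul, dotProduct, Finset.sum_apply]

private lemma mem_of_gen {n k : ℕ} {C : Submodule F (Fin n → F)}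
    {G : Matrix (Fin k) (Fin n) F} (hG : IsGenMat C G) {u : Fin n → F} :
    u ∈ C ↔ ∃ x : Fin k → F, Matrix.vecMul x G = u := by
  rw [← hG.2]
  rw [Submodule.mem_span_range_iff_exists_fun]
  simp_rw [vecMul_eq_sum' G]

theorem LCD_iff_GGt_invertible {n k : ℕ}
    (C : Submodule F (Fin n → F)) (hk : Module.finrank F C = k)
    (G : Matrix (Fin k) (Fin n) F) (hG : IsGenMat C G) :
    C ⊓ dualCode C = ⊥ ↔ IsUnit (G * G.transpose) := by
  have key : ∀ x : Fin k → F, G.mulVec (Matrix.vecMul x G) = (G * G.transpose).mulVec x := by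
    intro x
    rw [← Matrix.mulVec_transpose, ← Matrix.mulVec_mulVec]
  have hind : ∀ x : Fin k → F, Matrix.vecMul x G = 0 → x = 0 := by
    intro x hx
    have := Fintype.linearIndependent_iff.mp hG.1 x (by rw [vecMul_eq_sum' G, hx])
    funext i; exact this i
  have hdual : ∀ u : Fin n → F, u ∈ C → (u ∈ dualCode C ↔ G.mulVec u = 0) := by
    intro u _
    constructor
    · intro hu
      funext i
      have := hu (G i) ((mem_of_gen hG).mpr ⟨Pi.single i 1, by
        funext j; simp [Matrix.vecMul, dotProduct, Pi.single_apply]⟩)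
      simpa [Matrix.mulVec, dotProduct, mul_comm] using this
    · intro hu c hc
      obtain ⟨y, rfl⟩ := (mem_of_gen hG).mp hc
      rw [← Matrix.mulVec_transpose, Matrix.dotProduct_mulVec,
        Matrix.vecMul_transpose, hu]
      simp
  rw [← Matrix.mulVec_injective_iff_isUnit]
  have hinj : Function.Injective (G * G.transpose).mulVec ↔
      ∀ x, (G * G.transpose) *ᵥ x = 0 → x = 0 := by
    constructor
    · intro h x hx
      apply h
      simpa using hx
    · intro h
      exact (injective_iff_map_eq_zero (G * G.transpose).mulVecLin).mpr h
  rw [hinj]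
  constructor
  · intro h x hx
    have hmem : Matrix.vecMul x G ∈ C ⊓ dualCode C := by
      rw [Submodule.mem_inf]
      refine ⟨(mem_of_gen hG).mpr ⟨x, rfl⟩, ?_⟩
      rw [hdual _ ((mem_of_gen hG).mpr ⟨x, rfl⟩), key]
      exact hx
    rw [h] at hmem
    exact hind x (Submodule.mem_bot F |>.mp hmem)
  · intro h
    rw [Submodule.eq_bot_iff]
    rintro u ⟨huC, huD⟩
    obtain ⟨x, rfl⟩ := (mem_of_gen hG).mp huC
    have h0 : (G * G.transpose).mulVec x = 0 := by
      rw [← key]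
      exact (hdual _ huC).mp huD
    rw [h x h0]
    simp [Matrix.vecMul]
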